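/- arXiv:2309.15080 — 2 statements merged into one kernel-verified Lean document; each statement's English description precedes it below -/
import Mathlib

section
/- For complex numbers a and s, one has (a, s/2) ∈ 𝔹̄₂ (i.e. |a|² + |s|²/4 ≤ 1) if and only if there exists p ∈ ℂ with |p| = 1 such that (a,s,p) ∈ 𝔓̄. -/
open ContinuousLinearMap

noncomputable section

/-- The operator norm of a 2×2 complex matrix, acting on ℂ² with the Euclidean norm. -/
noncomputable def matOpNorm (M : Matrix (Fin 2) (Fin 2) ℂ) : ℝ :=
  ‖Matrix.toEuclideanCLM (𝕜 := ℂ) M‖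

/-- The closed pentablock 𝔓̄ ⊆ ℂ³ : the set of (a₂₁, tr A₀, det A₀) over 2×2 matrices A₀
of operator norm at most 1. -/
def pentablock : Set (ℂ × ℂ × ℂ) :=
  {x | ∃ M : Matrix (Fin 2) (Fin 2) ℂ, matOpNorm M ≤ 1 ∧ x = (M 1 0, M.trace, M.det)}

/-- The closed biball 𝔹̄₂ ⊆ ℂ². -/
def closedBiball : Set (ℂ × ℂ) :=
  {z | ‖z.1‖ ^ 2 + ‖z.2‖ ^ 2 ≤ 1}

lemma opNorm_le_one_of_unitary (M : Matrix (Fin 2) (Fin 2) ℂ)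
    (h : M.conjTranspose * M = 1) : matOpNorm M ≤ 1 := by
  set T := Matrix.toEuclideanCLM (𝕜 := ℂ) M with hT
  have h1 : star T * T = 1 := by
    rw [hT, ← map_star, ← map_mul]
    simp [Matrix.star_eq_conjTranspose, h]
  have h2 : ‖T‖ * ‖T‖ = 1 := by
    rw [← CStarRing.norm_star_mul_self, h1, norm_one]
  have := norm_nonneg T
  unfold matOpNorm
  nlinarith

lemma col_bound (M : Matrix (Fin 2) (Fin 2) ℂ) (hM : matOpNorm M ≤ 1) (j : Fin 2) :
    ‖M 0 j‖ ^ 2 + ‖M 1 j‖ ^ 2 ≤ 1 := by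
  set T := Matrix.toEuclideanCLM (𝕜 := ℂ) M with hT
  have key : ∀ i, (T (EuclideanSpace.single j 1)) i = M i j := by
    intro i
    have : EuclideanSpace.single j (1:ℂ) = (WithLp.equiv 2 (Fin 2 → ℂ)).symm (Pi.single j 1) := rfl
    rw [hT, this]
    simp [Matrix.toLin'_apply, Matrix.mulVec_single]
  have hle : ‖T (EuclideanSpace.single j 1)‖ ≤ 1 := by
    calc ‖T (EuclideanSpace.single j 1)‖ ≤ ‖T‖ * ‖EuclideanSpace.single j (1:ℂ)‖ :=
          T.le_opNorm _
      _ ≤ 1 := by rw [EuclideanSpace.norm_single]; simpa [matOpNorm, hT] using hM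
  have hnorm : ‖T (EuclideanSpace.single j 1)‖ ^ 2 = ‖M 0 j‖ ^ 2 + ‖M 1 j‖ ^ 2 := by
    rw [EuclideanSpace.norm_eq, Real.sq_sqrt (by positivity)]
    simp [Fin.sum_univ_two, key]
  nlinarith [norm_nonneg (T (EuclideanSpace.single j 1))]

lemma conj_mul_self' (z : ℂ) : (starRingEnd ℂ) z * z = ((‖z‖ : ℂ)) ^ 2 := by
  rw [← Complex.normSq_eq_conj_mul_self, Complex.normSq_eq_norm_sq]
  push_cast; ring

lemma unitary_block (a α e : ℂ)
    (hαa : (starRingEnd ℂ) α * α + (starRingEnd ℂ) a * a = 1)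
    (hee : (starRingEnd ℂ) e * e = 1) :
    (!![α, -((starRingEnd ℂ) a) * e ^ 2; a, ((starRingEnd ℂ) α) * e ^ 2]).conjTranspose *
      !![α, -((starRingEnd ℂ) a) * e ^ 2; a, ((starRingEnd ℂ) α) * e ^ 2] = 1 := by
  have hpp : ((starRingEnd ℂ) e) ^ 2 * e ^ 2 = 1 := by
    linear_combination ((starRingEnd ℂ) e * e + 1) * hee
  ext i j
  fin_cases i <;> fin_cases j <;>
    simp [Matrix.mul_apply, Fin.sum_univ_two, Matrix.conjTranspose_apply, Matrix.one_apply]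
  · linear_combination hαa
  · ring
  · ring
  · linear_combination (((starRingEnd ℂ) e) ^ 2 * e ^ 2) * hαa + hpp

theorem stmt8 (a s : ℂ) :
    (a, s / 2) ∈ closedBiball ↔ ∃ p : ℂ, ‖p‖ = 1 ∧ (a, s, p) ∈ pentablock := by
  constructor
  · intro hmem
    simp only [closedBiball, Set.mem_setOf_eq] at hmem
    have hsh : ‖s / 2‖ = ‖s‖ / 2 := by rw [norm_div]; norm_num
    rw [hsh] at hmem
    -- choose a unimodular direction e of s
    obtain ⟨e, hee, hes, hse⟩ :
        ∃ e : ℂ, (starRingEnd ℂ) e * e = 1 ∧ e * (starRingEnd ℂ) s = (starRingEnd ℂ) e * s ∧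
          (starRingEnd ℂ) s * e ^ 2 = s := by
      by_cases hs : s = 0
      · exact ⟨1, by simp, by simp [hs], by simp [hs]⟩
      · have hns : ((‖s‖ : ℂ)) ≠ 0 := by simpa using norm_ne_zero_iff.mpr hs
        have h1 : (starRingEnd ℂ) s * s = ((‖s‖ : ℂ)) ^ 2 := conj_mul_self' s
        have hcn : (starRingEnd ℂ) ((‖s‖ : ℂ)) = ((‖s‖ : ℂ)) := Complex.conj_ofReal _
        refine ⟨s / ((‖s‖ : ℂ)), ?_, ?_, ?_⟩
        · rw [map_div₀, hcn, div_mul_div_comm, ← sq, h1, div_self (pow_ne_zero 2 hns)]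
        · rw [map_div₀, hcn]; ring
        · have h6 : (starRingEnd ℂ) s * (s / ((‖s‖ : ℂ))) ^ 2 =
              ((starRingEnd ℂ) s * s) * s / ((‖s‖ : ℂ)) ^ 2 := by ring
          rw [h6, h1]
          exact mul_div_cancel_left₀ s (pow_ne_zero 2 hns)
    have hne : ‖e‖ = 1 := by
      have := conj_mul_self' e
      rw [hee] at this
      have h2 : ((‖e‖ : ℂ)) ^ 2 = 1 := this.symm
      have h3 : (‖e‖ : ℝ) ^ 2 = 1 := by exact_mod_cast h2
      nlinarith [norm_nonneg e]
    set t : ℝ := Real.sqrt (1 - ‖a‖ ^ 2 - ‖s‖ ^ 2 / 4) with htdef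
    have ht2 : t ^ 2 = 1 - ‖a‖ ^ 2 - ‖s‖ ^ 2 / 4 := by
      rw [htdef, Real.sq_sqrt (by nlinarith)]
    have ht : ((t : ℂ)) ^ 2 + (starRingEnd ℂ) s * s / 4 + (starRingEnd ℂ) a * a = 1 := by
      rw [conj_mul_self', conj_mul_self']
      have h4 : ((t : ℂ)) ^ 2 = ((t ^ 2 : ℝ) : ℂ) := by push_cast; ring
      rw [h4, ht2]
      push_cast
      ring
    set α : ℂ := s / 2 + (t : ℂ) * Complex.I * e with hα
    have hcα : (starRingEnd ℂ) α =
        (starRingEnd ℂ) s / 2 - (t : ℂ) * Complex.I * (starRingEnd ℂ) e := by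
      simp only [hα, map_add, map_mul, map_div₀, map_ofNat, Complex.conj_I, Complex.conj_ofReal]
      ring
    have hαa : (starRingEnd ℂ) α * α + (starRingEnd ℂ) a * a = 1 := by
      rw [hcα, hα]
      linear_combination ht + ((t : ℂ) * Complex.I / 2) * hes +
        (-(t : ℂ) ^ 2 * (starRingEnd ℂ) e * e) * Complex.I_sq + (t : ℂ) ^ 2 * hee
    refine ⟨e ^ 2, by rw [norm_pow, hne]; norm_num,
      !![α, -((starRingEnd ℂ) a) * e ^ 2; a, ((starRingEnd ℂ) α) * e ^ 2], ?_, ?_⟩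
    · exact opNorm_le_one_of_unitary _ (unitary_block a α e hαa hee)
    · have h10 : (!![α, -((starRingEnd ℂ) a) * e ^ 2; a, ((starRingEnd ℂ) α) * e ^ 2]) 1 0 = a := by
        simp
      have htr : (!![α, -((starRingEnd ℂ) a) * e ^ 2; a,
          ((starRingEnd ℂ) α) * e ^ 2]).trace = s := by
        simp only [Matrix.trace_fin_two_of]
        rw [hcα, hα]
        linear_combination (1/2) * hse + (-(t : ℂ) * Complex.I * e) * hee
      have hdet : (!![α, -((starRingEnd ℂ) a) * e ^ 2; a,
          ((starRingEnd ℂ) α) * e ^ 2]).det = e ^ 2 := by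
        simp only [Matrix.det_fin_two_of]
        linear_combination (e ^ 2) * hαa
      rw [h10, htr, hdet]
  · rintro ⟨p, hp, M, hM, heq⟩
    obtain ⟨ha, hs, hpd⟩ : a = M 1 0 ∧ s = M.trace ∧ p = M.det := by
      simpa [Prod.ext_iff] using heq
    have h0 := col_bound M hM 0
    have h1 := col_bound M hM 1
    have hdet : (1 : ℝ) ≤ ‖M 0 0‖ * ‖M 1 1‖ + ‖M 0 1‖ * ‖M 1 0‖ := by
      have h2 : ‖M.det‖ = 1 := by rw [← hpd]; exact hp
      rw [Matrix.det_fin_two] at h2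
      calc (1 : ℝ) = ‖M 0 0 * M 1 1 - M 0 1 * M 1 0‖ := h2.symm
        _ ≤ ‖M 0 0 * M 1 1‖ + ‖M 0 1 * M 1 0‖ := norm_sub_le _ _
        _ = ‖M 0 0‖ * ‖M 1 1‖ + ‖M 0 1‖ * ‖M 1 0‖ := by rw [norm_mul, norm_mul]
    have htr : ‖s‖ ≤ ‖M 0 0‖ + ‖M 1 1‖ := by
      rw [hs, Matrix.trace_fin_two]; exact norm_add_le _ _
    simp only [closedBiball, Set.mem_setOf_eq]
    have hsh : ‖s / 2‖ = ‖s‖ / 2 := by rw [norm_div]; norm_num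
    rw [hsh, ha]
    have hsq : (‖M 0 0‖ - ‖M 1 1‖) ^ 2 + (‖M 1 0‖ - ‖M 0 1‖) ^ 2 ≤ 0 := by nlinarith
    have he1 : ‖M 0 0‖ = ‖M 1 1‖ := by
      nlinarith [sq_nonneg (‖M 0 0‖ - ‖M 1 1‖), sq_nonneg (‖M 1 0‖ - ‖M 0 1‖)]
    have hs4 : ‖s‖ ^ 2 ≤ 4 * ‖M 0 0‖ ^ 2 := by
      have h5 : ‖s‖ ≤ 2 * ‖M 0 0‖ := by rw [he1] at htr ⊢; linarith
      nlinarith [norm_nonneg s]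
    nlinarith
end
end

section
/- Let (A,S) be a 𝔹₂-contraction on a complex Hilbert space H. Then (A, S, 0) is a 𝔓-contraction. -/
open ContinuousLinearMap

noncomputable section

/-- sup of |f| over a subset of ℂ³, for a polynomial f in three variables. -/
noncomputable def supAbs3 (X : Set (ℂ × ℂ × ℂ)) (f : MvPolynomial (Fin 3) ℂ) : ℝ :=
  sSup ((fun z : ℂ × ℂ × ℂ => ‖MvPolynomial.eval ![z.1, z.2.1, z.2.2] f‖) '' X)

/-- sup of |g| over a subset of ℂ², for a polynomial g in two variables. -/
noncomputable def supAbs2 (X : Set (ℂ × ℂ)) (g : MvPolynomial (Fin 2) ℂ) : ℝ :=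
  sSup ((fun z : ℂ × ℂ => ‖MvPolynomial.eval ![z.1, z.2] g‖) '' X)

variable {H : Type*} [NormedAddCommGroup H] [InnerProductSpace ℂ H]

/-- Evaluation f(A,S,P) of a three-variable polynomial at a commuting triple of operators. -/
noncomputable def opEval3 (A S P : H →L[ℂ] H) (f : MvPolynomial (Fin 3) ℂ) : H →L[ℂ] H :=
  ∑ m ∈ f.support, f.coeff m • (A ^ m 0 * S ^ m 1 * P ^ m 2)

/-- Evaluation g(S,P) of a two-variable polynomial at a commuting pair of operators. -/
noncomputable def opEval2 (S P : H →L[ℂ] H) (g : MvPolynomial (Fin 2) ℂ) : H →L[ℂ] H :=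
  ∑ m ∈ g.support, g.coeff m • (S ^ m 0 * P ^ m 1)

/-- A commuting triple (A,S,P) is a 𝔓-contraction if the von Neumann inequality over the
closed pentablock holds for every polynomial in three variables. -/
def IsPContraction (A S P : H →L[ℂ] H) : Prop :=
  Commute A S ∧ Commute A P ∧ Commute S P ∧
    ∀ f : MvPolynomial (Fin 3) ℂ, ‖opEval3 A S P f‖ ≤ supAbs3 pentablock f

/-- A commuting pair is a 𝔹₂-contraction if the von Neumann inequality over the
closed biball holds for every polynomial in two variables. -/
def IsB2Contraction (A B : H →L[ℂ] H) : Prop :=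
  Commute A B ∧
    ∀ g : MvPolynomial (Fin 2) ℂ, ‖opEval2 A B g‖ ≤ supAbs2 closedBiball g


open MvPolynomial in
lemma opEval3_monomial' (A S P : H →L[ℂ] H) (m : Fin 3 →₀ ℕ) (c : ℂ) :
    opEval3 A S P (monomial m c) = c • (A ^ m 0 * S ^ m 1 * P ^ m 2) := by
  unfold opEval3
  by_cases hc : c = 0
  · simp [hc, support_monomial]
  · simp [support_monomial, hc, coeff_monomial]

open MvPolynomial in
lemma opEval2_monomial' (A S : H →L[ℂ] H) (m : Fin 2 →₀ ℕ) (c : ℂ) :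
    opEval2 A S (monomial m c) = c • (A ^ m 0 * S ^ m 1) := by
  unfold opEval2
  by_cases hc : c = 0
  · simp [hc, support_monomial]
  · simp [support_monomial, hc, coeff_monomial]

lemma opEval2_add' (A S : H →L[ℂ] H) (f g : MvPolynomial (Fin 2) ℂ) :
    opEval2 A S (f + g) = opEval2 A S f + opEval2 A S g := by
  have hrep : ∀ p : MvPolynomial (Fin 2) ℂ, opEval2 A S p
      = Finsupp.sum (AddMonoidAlgebra.coeff p) (fun m c => c • (A ^ m 0 * S ^ m 1)) := fun _ => rfl
  rw [hrep, hrep, hrep, AddMonoidAlgebra.coeff_add]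
  exact Finsupp.sum_add_index' (fun m => by simp) (fun m c d => add_smul c d _)

lemma opEval3_add' (A S P : H →L[ℂ] H) (f g : MvPolynomial (Fin 3) ℂ) :
    opEval3 A S P (f + g) = opEval3 A S P f + opEval3 A S P g := by
  have hrep : ∀ p : MvPolynomial (Fin 3) ℂ, opEval3 A S P p
      = Finsupp.sum (AddMonoidAlgebra.coeff p) (fun m c => c • (A ^ m 0 * S ^ m 1 * P ^ m 2)) := fun _ => rfl
  rw [hrep, hrep, hrep, AddMonoidAlgebra.coeff_add]
  exact Finsupp.sum_add_index' (fun m => by simp) (fun m c d => add_smul c d _)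

/-- substitute 0 for the third variable -/
noncomputable def restr3 (f : MvPolynomial (Fin 3) ℂ) : MvPolynomial (Fin 2) ℂ :=
  MvPolynomial.eval₂Hom MvPolynomial.C ![MvPolynomial.X 0, MvPolynomial.X 1, 0] f

open MvPolynomial in
lemma opEval2_CXX (A S : H →L[ℂ] H) (c : ℂ) (a b : ℕ) :
    opEval2 A S (C c * (X 0 ^ a * X 1 ^ b)) = c • (A ^ a * S ^ b) := by
  have h : (C c * (X 0 ^ a * X 1 ^ b) : MvPolynomial (Fin 2) ℂ)
      = monomial (Finsupp.single 0 a + Finsupp.single 1 b) c := by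
    rw [monomial_eq]
    rw [Finsupp.prod_fintype _ _ (fun i => pow_zero _)]
    simp [Fin.prod_univ_two, Finsupp.single_apply]
  rw [h, opEval2_monomial']
  simp [Finsupp.single_apply]

open MvPolynomial in
lemma opEval3_zero_eq (A S : H →L[ℂ] H) (f : MvPolynomial (Fin 3) ℂ) :
    opEval3 A S 0 f = opEval2 A S (restr3 f) := by
  induction f using MvPolynomial.induction_on' with
  | monomial m c =>
    rw [opEval3_monomial']
    unfold restr3
    rw [eval₂Hom_monomial]
    rw [Finsupp.prod_fintype _ _ (fun i => pow_zero _), Fin.prod_univ_three]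
    simp only [Matrix.cons_val_zero, Matrix.cons_val_one, Matrix.head_cons,
      Matrix.cons_val_two, Matrix.tail_cons]
    by_cases hm : m 2 = 0
    · rw [hm, pow_zero, pow_zero, mul_one, mul_one, opEval2_CXX]
    · rw [zero_pow hm, zero_pow hm, mul_zero, mul_zero, smul_zero, mul_zero]
      show _ = opEval2 A S 0
      have : (0 : MvPolynomial (Fin 2) ℂ) = monomial 0 0 := by simp
      rw [this, opEval2_monomial']; simp
  | add p q hp hq =>
    rw [opEval3_add', hp, hq]
    unfold restr3
    rw [map_add, opEval2_add']

open MvPolynomial in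
lemma eval_restr3 (z1 z2 : ℂ) (f : MvPolynomial (Fin 3) ℂ) :
    eval ![z1, z2] (restr3 f) = eval ![z1, z2, 0] f := by
  unfold restr3
  rw [show (eval₂Hom C ![X 0, X 1, (0 : MvPolynomial (Fin 2) ℂ)] f)
    = eval₂ C ![X 0, X 1, 0] f from rfl]
  rw [eval₂_comp_left (eval ![z1, z2]) C ![X 0, X 1, 0] f]
  have h1 : (eval ![z1, z2]).comp (C : ℂ →+* MvPolynomial (Fin 2) ℂ) = RingHom.id ℂ := by
    ext c; simp
  have h2 : ⇑(eval ![z1, z2]) ∘ ![X 0, X 1, (0 : MvPolynomial (Fin 2) ℂ)] = ![z1, z2, 0] := by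
    funext i; fin_cases i <;> simp
  rw [h1, h2, eval₂_id]

lemma matOpNorm_aux_le_one (z1 z2 : ℂ) (hz : ‖z1‖ ^ 2 + ‖z2‖ ^ 2 ≤ 1) :
    matOpNorm ![![0, 0], ![z1, z2]] ≤ 1 := by
  unfold matOpNorm
  apply ContinuousLinearMap.opNorm_le_bound _ zero_le_one
  intro x
  rw [one_mul]
  set M : Matrix (Fin 2) (Fin 2) ℂ := ![![0, 0], ![z1, z2]]
  set y := Matrix.toEuclideanCLM (𝕜 := ℂ) M x with hy
  have hy0 : y 0 = 0 := by
    have := Matrix.ofLp_toEuclideanCLM (𝕜 := ℂ) M x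
    have h0 := congrFun this 0
    simpa [M, Matrix.toLin'_apply, Matrix.mulVec, dotProduct] using h0
  have hy1 : y 1 = z1 * x 0 + z2 * x 1 := by
    have := Matrix.ofLp_toEuclideanCLM (𝕜 := ℂ) M x
    have h1 := congrFun this 1
    simpa [M, Matrix.toLin'_apply, Matrix.mulVec, dotProduct, Fin.sum_univ_two] using h1
  set w : EuclideanSpace ℂ (Fin 2) := (WithLp.equiv 2 _).symm ![starRingEnd ℂ z1, starRingEnd ℂ z2]
  have hinner : (inner ℂ w x : ℂ) = z1 * x 0 + z2 * x 1 := by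
    simp [w, EuclideanSpace.inner_eq_star_dotProduct]; ring
  have hwle : ‖w‖ ≤ 1 := by
    rw [EuclideanSpace.norm_eq]
    refine Real.sqrt_le_one.mpr ?_
    rw [Fin.sum_univ_two]
    simpa [w, WithLp.equiv_symm_apply] using hz
  have hcs : ‖y 1‖ ≤ ‖x‖ := by
    rw [hy1, ← hinner]
    calc ‖(inner ℂ w x : ℂ)‖ ≤ ‖w‖ * ‖x‖ := norm_inner_le_norm w x
    _ ≤ 1 * ‖x‖ := by gcongr
    _ = ‖x‖ := one_mul _
  have hnorm : ‖y‖ = ‖y 1‖ := by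
    rw [EuclideanSpace.norm_eq]
    rw [Fin.sum_univ_two, hy0]
    simp [Real.sqrt_sq_eq_abs]
  rw [hnorm]
  exact hcs

set_option synthInstance.maxHeartbeats 1000000 in
set_option maxHeartbeats 1000000 in
lemma pentablock_isCompact : IsCompact pentablock := by
  set E := EuclideanSpace ℂ (Fin 2) →L[ℂ] EuclideanSpace ℂ (Fin 2)
  let e := Matrix.toEuclideanCLM (n := Fin 2) (𝕜 := ℂ)
  let L : E →ₗ[ℂ] Matrix (Fin 2) (Fin 2) ℂ :=
    { toFun := ⇑e.symm, map_add' := fun a b => map_add _ a b,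
      map_smul' := fun c a => map_smul _ c a }
  have hLcont : Continuous (⇑e.symm) := L.continuous_of_finiteDimensional
  have hK : {M : Matrix (Fin 2) (Fin 2) ℂ | matOpNorm M ≤ 1}
      = ⇑e.symm '' Metric.closedBall 0 1 := by
    ext M
    constructor
    · intro hM
      exact ⟨e M, by simpa [matOpNorm] using hM, by simp⟩
    · rintro ⟨T, hT, rfl⟩
      show ‖e (e.symm T)‖ ≤ 1
      rw [e.apply_symm_apply]
      exact mem_closedBall_zero_iff.mp hT
  haveI : FiniteDimensional ℂ E := inferInstance
  haveI : ProperSpace E := FiniteDimensional.proper ℂ E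
  have hKc : IsCompact {M : Matrix (Fin 2) (Fin 2) ℂ | matOpNorm M ≤ 1} := by
    rw [hK]
    exact (isCompact_closedBall (0 : E) 1).image hLcont
  have hg : Continuous fun M : Matrix (Fin 2) (Fin 2) ℂ =>
      ((M 1 0, M.trace, M.det) : ℂ × ℂ × ℂ) := by
    have hentry : ∀ i j : Fin 2, Continuous fun M : Matrix (Fin 2) (Fin 2) ℂ => M i j :=
      fun i j => (continuous_apply j).comp (continuous_apply i)
    refine Continuous.prodMk (hentry 1 0) (Continuous.prodMk ?_ ?_)
    · rw [show (Matrix.trace : Matrix (Fin 2) (Fin 2) ℂ → ℂ) = fun M => M 0 0 + M 1 1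
        from funext fun M => Matrix.trace_fin_two M]
      exact (hentry 0 0).add (hentry 1 1)
    · rw [show (Matrix.det : Matrix (Fin 2) (Fin 2) ℂ → ℂ) = fun M => M 0 0 * M 1 1 - M 0 1 * M 1 0
        from funext fun M => Matrix.det_fin_two M]
      exact ((hentry 0 0).mul (hentry 1 1)).sub ((hentry 0 1).mul (hentry 1 0))
  have hpb : pentablock = (fun M : Matrix (Fin 2) (Fin 2) ℂ =>
      ((M 1 0, M.trace, M.det) : ℂ × ℂ × ℂ)) '' {M | matOpNorm M ≤ 1} := by
    ext x
    simp only [pentablock, Set.mem_setOf_eq, Set.mem_image]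
    exact ⟨fun ⟨M, h1, h2⟩ => ⟨M, h1, h2.symm⟩, fun ⟨M, h1, h2⟩ => ⟨M, h1, h2.symm⟩⟩
  rw [hpb]
  exact hKc.image hg

theorem stmt10 {H : Type*} [NormedAddCommGroup H] [InnerProductSpace ℂ H] [CompleteSpace H]
    (A S : H →L[ℂ] H) (h : IsB2Contraction A S) :
    IsPContraction A S (0 : H →L[ℂ] H) := by
  obtain ⟨hAS, hvN⟩ := h
  refine ⟨hAS, Commute.zero_right A, Commute.zero_right S, ?_⟩
  intro f
  rw [opEval3_zero_eq A S f]
  refine le_trans (hvN (restr3 f)) ?_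
  unfold supAbs2 supAbs3
  apply csSup_le_csSup
  · apply IsCompact.bddAbove
    apply pentablock_isCompact.image
    apply Continuous.norm
    have hc : Continuous fun z : ℂ × ℂ × ℂ => (![z.1, z.2.1, z.2.2] : Fin 3 → ℂ) := by
      refine continuous_pi fun i => ?_
      fin_cases i
      · exact continuous_fst
      · exact continuous_snd.fst
      · exact continuous_snd.snd
    exact (MvPolynomial.continuous_eval f).comp hc
  · exact ⟨_, ⟨((0 : ℂ), (0 : ℂ)), by simp [closedBiball], rfl⟩⟩
  · rintro r ⟨z, hz, rfl⟩
    refine ⟨(z.1, z.2, 0), ?_, ?_⟩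
    · refine ⟨![![0, 0], ![z.1, z.2]], matOpNorm_aux_le_one z.1 z.2 hz, ?_⟩
      simp [Matrix.trace_fin_two (A := ![![0, 0], ![z.1, z.2]]), Matrix.det_fin_two (A := ![![0, 0], ![z.1, z.2]])]
    · show ‖MvPolynomial.eval ![z.1, z.2, 0] f‖ = ‖MvPolynomial.eval ![z.1, z.2] (restr3 f)‖
      rw [eval_restr3]
end
end
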